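/- Let p be a prime, let s, n, m be positive integers with gcd(n, p) = 1, let F be the finite field with p^m elements, let η be a nonzero element of F, and let η₀ ∈ F satisfy η₀^{p^s} = η (such η₀ exists). Suppose x^n − η₀ is irreducible over F. Then every ideal C of F[x]/⟨x^{np^s} − η⟩ equals ⟨(x^n − η₀)^υ⟩ for exactly one integer υ with 0 ≤ υ ≤ p^s, and the Hamming distance of C = ⟨(x^n − η₀)^υ⟩ is: 1 if υ = 0; ℓ + 2 if ℓp^{s−1} + 1 ≤ υ ≤ (ℓ+1)p^{s−1} for some 0 ≤ ℓ ≤ p − 2; (i+1)p^k if p^s − p^{s−k} + (i−1)p^{s−k−1} + 1 ≤ υ ≤ p^s − p^{s−k} + i·p^{s−k−1} for some 1 ≤ i ≤ p − 1 and 1 ≤ k ≤ s − 1; and 0 if υ = p^s. -/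

import Mathlib

open Polynomial

/-- The unique representative of degree `< deg q` of an element of `A[x]/⟨q⟩`
(for `q` monic). -/
noncomputable def polyRep {A : Type} [CommRing A] (q : A[X]) (c : A[X] ⧸ Ideal.span {q}) :
    A[X] :=
  Function.surjInv Ideal.Quotient.mk_surjective c %ₘ q

/-- Hamming weight of a codeword: the number of nonzero coefficients of its
representative of degree `< deg q`. -/
noncomputable def wH {A : Type} [CommRing A] (q : A[X]) (c : A[X] ⧸ Ideal.span {q}) : ℕ :=
  (polyRep q c).support.card

/-- Hamming distance of a code (an ideal of `A[x]/⟨q⟩`): the minimum Hamming weight of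
a nonzero codeword, `0` for the zero code (`sInf ∅ = 0` in `ℕ`). -/
noncomputable def dH {A : Type} [CommRing A] (q : A[X])
    (I : Ideal (A[X] ⧸ Ideal.span {q})) : ℕ :=
  sInf {w : ℕ | ∃ c ∈ I, c ≠ 0 ∧ w = wH q c}

open Polynomial Finset

/-- The minimum-distance function. -/
def Dfun (p : ℕ) : ℕ → ℕ → ℕ
  | 0, _ => 1
  | s+1, t =>
    if t = 0 then 1 else
    if t ≤ (p-1) * p^s then (t-1)/p^s + 2
    else p * Dfun p s (t - (p-1)*p^s)

lemma Dfun_zero (p s : ℕ) : Dfun p s 0 = 1 := by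
  cases s <;> simp [Dfun]

lemma pred_mul_pow (p a : ℕ) : (p-1) * p^a = p^(a+1) - p^a := by
  rw [Nat.sub_mul, one_mul, ← pow_succ']

lemma Dfun_pos (p s t : ℕ) (hp : 2 ≤ p) : 1 ≤ Dfun p s t := by
  induction s generalizing t with
  | zero => simp [Dfun]
  | succ s ih =>
    simp only [Dfun]
    split
    · omega
    · split
      · have := Nat.zero_le ((t-1)/p^s); omega
      · have := ih (t - (p-1)*p^s); calc 1 ≤ 1 * 1 := by omega
          _ ≤ p * Dfun p s (t - (p-1)*p^s) := Nat.mul_le_mul (by omega) this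

lemma Dfun_two (p s t : ℕ) (hp : 2 ≤ p) (ht : 1 ≤ t) (ht' : t < p^s) : 2 ≤ Dfun p s t := by
  cases s with
  | zero => simp at ht'; omega
  | succ s =>
    simp only [Dfun]
    rw [if_neg (by omega)]
    split
    · have := Nat.zero_le ((t-1)/p^s); omega
    · calc 2 ≤ p * 1 := by omega
        _ ≤ p * Dfun p s (t - (p-1)*p^s) := Nat.mul_le_mul_left p (Dfun_pos p s _ hp)

lemma Dfun_mid (p s t ℓ : ℕ) (hp : 2 ≤ p) (hs : 1 ≤ s) (hl : ℓ ≤ p - 2)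
    (h1 : ℓ * p^(s-1) + 1 ≤ t) (h2 : t ≤ (ℓ+1) * p^(s-1)) :
    Dfun p s t = ℓ + 2 := by
  obtain ⟨s', rfl⟩ : ∃ s', s = s' + 1 := ⟨s - 1, by omega⟩
  simp only [Nat.add_sub_cancel] at h1 h2
  have hp0 : 0 < p ^ s' := pow_pos (by omega) _
  have hle : t ≤ (p-1) * p^s' := le_trans h2 (Nat.mul_le_mul_right _ (by omega))
  simp only [Dfun]
  rw [if_neg (by omega), if_pos hle]
  have : (t-1) / p^s' = ℓ := Nat.div_eq_of_lt_le (by omega) (by omega)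
  omega

lemma Dfun_succ_high (p s t : ℕ) (h0 : t ≠ 0) (h : ¬ t ≤ (p-1)*p^s) :
    Dfun p (s+1) t = p * Dfun p s (t - (p-1)*p^s) := by
  simp only [Dfun]; rw [if_neg h0, if_neg h]

lemma Dfun_high' (p : ℕ) (hp : 2 ≤ p) :
    ∀ κ a t i, 1 ≤ i → i ≤ p - 1 →
    p^(κ+2+a) - p^(a+1) + (i-1) * p^a + 1 ≤ t →
    t ≤ p^(κ+2+a) - p^(a+1) + i * p^a →
    Dfun p (κ+2+a) t = (i+1) * p^(κ+1) := by
  have hpow : ∀ u v : ℕ, u ≤ v → p^u ≤ p^v := fun u v h => Nat.pow_le_pow_right (by omega) h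
  have hpos : ∀ u : ℕ, 0 < p^u := fun u => pow_pos (by omega) _
  intro κ
  induction κ with
  | zero =>
    intro a t i hi1 hi2 h1 h2
    have e0 : (0:ℕ)+2+a = (a+1)+1 := by omega
    rw [e0] at h1 h2 ⊢
    have hsub : (p-1) * p^(a+1) = p^(a+1+1) - p^(a+1) := pred_mul_pow p (a+1)
    have hm : p^(a+1) ≤ p^(a+1+1) := hpow _ _ (by omega)
    have hm2 : p^a ≤ p^(a+1) := hpow _ _ (by omega)
    have hia : i * p^a ≤ p^(a+1) := by
      calc i * p^a ≤ p * p^a := Nat.mul_le_mul_right _ (by omega)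
        _ = p^(a+1) := (pow_succ' p a).symm
    have hia' : (i-1) * p^a ≤ i * p^a := Nat.mul_le_mul_right _ (by omega)
    rw [Dfun_succ_high p (a+1) t (by have := hpos (a+1+1); omega) (by omega)]
    have hmid : Dfun p (a+1) (t - (p-1)*p^(a+1)) = (i-1) + 2 := by
      apply Dfun_mid p (a+1) _ (i-1) hp (by omega) (by omega)
      · simp only [Nat.add_sub_cancel]; omega
      · simp only [Nat.add_sub_cancel]
        have : i - 1 + 1 = i := by omega
        rw [this]; omega
    rw [hmid]
    have : i - 1 + 2 = i + 1 := by omega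
    rw [this, pow_succ']; ring
  | succ κ ih =>
    intro a t i hi1 hi2 h1 h2
    have e0 : κ+1+2+a = (κ+2+a)+1 := by omega
    rw [e0] at h1 h2 ⊢
    have hsub : (p-1) * p^(κ+2+a) = p^(κ+2+a+1) - p^(κ+2+a) := pred_mul_pow p _
    have hm : p^(κ+2+a) ≤ p^(κ+2+a+1) := hpow _ _ (by omega)
    have hm1 : p^(a+1) ≤ p^(κ+2+a) := hpow _ _ (by omega)
    have hm2 : p^a ≤ p^(a+1) := hpow _ _ (by omega)
    have hia : i * p^a ≤ p^(a+1) := by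
      calc i * p^a ≤ p * p^a := Nat.mul_le_mul_right _ (by omega)
        _ = p^(a+1) := (pow_succ' p a).symm
    have hia' : (i-1) * p^a ≤ i * p^a := Nat.mul_le_mul_right _ (by omega)
    rw [Dfun_succ_high p (κ+2+a) t (by have := hpos (κ+2+a+1); omega) (by omega)]
    rw [ih a (t - (p-1)*p^(κ+2+a)) i hi1 hi2 (by omega) (by omega)]
    rw [pow_succ']; ring

lemma Dfun_high (p s t i k : ℕ) (hp : 2 ≤ p) (hi1 : 1 ≤ i) (hi2 : i ≤ p - 1)
    (hk1 : 1 ≤ k) (hk2 : k ≤ s - 1) (hs : 1 ≤ s)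
    (h1 : p^s - p^(s-k) + (i-1) * p^(s-k-1) + 1 ≤ t)
    (h2 : t ≤ p^s - p^(s-k) + i * p^(s-k-1)) :
    Dfun p s t = (i+1) * p^k := by
  obtain ⟨κ, rfl⟩ : ∃ κ, k = κ + 1 := ⟨k - 1, by omega⟩
  obtain ⟨a, rfl⟩ : ∃ a, s = κ + 2 + a := ⟨s - κ - 2, by omega⟩
  have e1 : κ+2+a - (κ+1) = a+1 := by omega
  have e2 : κ+2+a - (κ+1) - 1 = a := by omega
  rw [e1] at h1 h2
  simp only [Nat.add_sub_cancel] at h1 h2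
  exact Dfun_high' p hp κ a t i hi1 hi2 h1 h2

lemma Dfun_succ_mid (p s t : ℕ) (h0 : t ≠ 0) (h : t ≤ (p-1)*p^s) :
    Dfun p (s+1) t = (t-1)/p^s + 2 := by
  simp only [Dfun]; rw [if_neg h0, if_pos h]
open Polynomial Finset

variable {F : Type} [Field F]

lemma support_C_mul {a : F} (ha : a ≠ 0) (h : F[X]) : (C a * h).support = h.support := by
  ext i
  simp [mem_support_iff, coeff_C_mul, ha]

lemma card_support_C_mul {a : F} (ha : a ≠ 0) (h : F[X]) :
    (C a * h).support.card = h.support.card := by rw [support_C_mul ha]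

lemma support_sum_monomials {ι : Type} (S : Finset ι) (mdeg : ι → ℕ) (cf : ι → F)
    (hinj : Set.InjOn mdeg S) (hc : ∀ e ∈ S, cf e ≠ 0) :
    (∑ e ∈ S, C (cf e) * X ^ (mdeg e)).support = S.image mdeg := by
  ext t
  simp only [mem_support_iff, finset_sum_coeff, C_mul_X_pow_eq_monomial, coeff_monomial,
    Finset.mem_image]
  constructor
  · intro h
    by_contra hc'
    push_neg at hc'
    apply h
    apply Finset.sum_eq_zero
    intro e he
    rw [if_neg (hc' e he)]
  · rintro ⟨e₀, he₀, rfl⟩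
    rw [Finset.sum_eq_single_of_mem e₀ he₀]
    · simpa using hc e₀ he₀
    · intro e he hne
      rw [if_neg]
      exact fun h => hne (hinj he he₀ h)

lemma card_support_sum_monomials {ι : Type} (S : Finset ι) (mdeg : ι → ℕ) (cf : ι → F)
    (hinj : Set.InjOn mdeg S) (hc : ∀ e ∈ S, cf e ≠ 0) :
    (∑ e ∈ S, C (cf e) * X ^ (mdeg e)).support.card = S.card := by
  rw [support_sum_monomials S mdeg cf hinj hc, Finset.card_image_of_injOn hinj]

/-- Key sparsity lemma: a nonzero polynomial of degree `< p` (char `p`) divisible by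
`(X - b)^m` with `b ≠ 0` has more than `m` nonzero coefficients. -/
lemma sparse_lemma {p : ℕ} (hp : p.Prime) [CharP F p] {b : F} (hb : b ≠ 0) :
    ∀ N (χ : F[X]), χ ≠ 0 → χ.natDegree ≤ N → χ.natDegree < p →
    ∀ m, (X - C b)^m ∣ χ → m < χ.support.card := by
  intro N
  induction N with
  | zero =>
    intro χ hχ hdeg hdegp m hdvd
    cases m with
    | zero => simpa [Finset.card_pos] using Polynomial.support_nonempty.mpr hχ
    | succ m =>
      exfalso
      have := Polynomial.natDegree_le_of_dvd hdvd hχ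
      rw [natDegree_pow, natDegree_X_sub_C, mul_one] at this
      omega
  | succ N ih =>
    intro χ hχ hdeg hdegp m hdvd
    cases m with
    | zero => simpa [Finset.card_pos] using Polynomial.support_nonempty.mpr hχ
    | succ m =>
      have hub : m + 1 ≤ χ.natDegree := by
        have := Polynomial.natDegree_le_of_dvd hdvd hχ
        rwa [natDegree_pow, natDegree_X_sub_C, mul_one] at this
      by_cases h0 : χ.coeff 0 = 0
      · obtain ⟨χ₁, hχ₁⟩ := X_dvd_iff.mpr h0
        have hχ₁0 : χ₁ ≠ 0 := fun h => hχ (by rw [hχ₁, h, mul_zero])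
        have hcop : IsCoprime (X - C b : F[X]) X := by
          refine ⟨-C b⁻¹, C b⁻¹, ?_⟩
          rw [show (-C b⁻¹ * (X - C b) + C b⁻¹ * X : F[X]) = C b⁻¹ * C b by ring,
            ← C_mul, inv_mul_cancel₀ hb, C_1]
        have hdvd₁ : (X - C b)^(m+1) ∣ χ₁ :=
          (hcop.pow_left).dvd_of_dvd_mul_left (by rwa [← hχ₁])
        have hdegX : χ.natDegree = χ₁.natDegree + 1 := by
          rw [hχ₁, natDegree_X_mul hχ₁0]
        have hsupp : χ.support.card = χ₁.support.card := by
          rw [hχ₁]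
          have himg : (X * χ₁).support = χ₁.support.image (· + 1) := by
            ext t
            simp only [mem_support_iff, Finset.mem_image]
            cases t with
            | zero => simp
            | succ t =>
              rw [coeff_X_mul]
              constructor
              · intro h; exact ⟨t, h, rfl⟩
              · rintro ⟨u, hu, hut⟩
                have : u = t := by omega
                subst this; exact hu
          rw [himg, Finset.card_image_of_injective _ (fun a b h => by omega)]
        rw [hsupp]
        exact ih χ₁ hχ₁0 (by omega) (by omega) (m+1) hdvd₁
      · -- derivative step
        obtain ⟨u, hu⟩ := hdvd
        have hdd : (X - C b)^m ∣ derivative χ := by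
          rw [hu, derivative_mul, derivative_pow, derivative_sub, derivative_X, derivative_C,
            sub_zero, mul_one]
          refine dvd_add ?_ ((pow_dvd_pow _ (by omega : m ≤ m+1)).mul_right _)
          rw [Nat.add_sub_cancel]
          exact (dvd_mul_left _ _).mul_right _
        have hcast : ((χ.natDegree : F)) ≠ 0 := by
          rw [Ne, CharP.cast_eq_zero_iff F p]
          intro hdvd'
          have := Nat.le_of_dvd (by omega) hdvd'
          omega
        have e : χ.natDegree - 1 + 1 = χ.natDegree := by omega
        have hlead : (derivative χ).coeff (χ.natDegree - 1) ≠ 0 := by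
          rw [coeff_derivative]
          apply mul_ne_zero
          · rw [e]; exact mt leadingCoeff_eq_zero.mp hχ
          · have ec : ((χ.natDegree - 1 : ℕ) : F) + 1 = (χ.natDegree : F) := by
              rw [← Nat.cast_add_one, e]
            rw [ec]; exact hcast
        have hd0 : derivative χ ≠ 0 := fun h => hlead (by simp [h])
        have hdegd : (derivative χ).natDegree < χ.natDegree := natDegree_derivative_lt (by omega)
        have hcard : (derivative χ).support.card + 1 ≤ χ.support.card := by
          have hmap : (derivative χ).support.image (· + 1) ⊆ χ.support.erase 0 := by
            intro t ht
            simp only [Finset.mem_image, mem_support_iff] at ht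
            obtain ⟨i, hi, rfl⟩ := ht
            rw [coeff_derivative] at hi
            have : χ.coeff (i+1) ≠ 0 := fun h => hi (by rw [h, zero_mul])
            exact Finset.mem_erase.mpr ⟨by omega, mem_support_iff.mpr this⟩
          have h1 : (derivative χ).support.card = ((derivative χ).support.image (· + 1)).card :=
            (Finset.card_image_of_injective _ (fun a b h => by omega)).symm
          have h2 := Finset.card_le_card hmap
          have h3 : (χ.support.erase 0).card = χ.support.card - 1 :=
            Finset.card_erase_of_mem (mem_support_iff.mpr h0)
          have h4 : 0 < χ.support.card := Finset.card_pos.mpr (support_nonempty.mpr hχ)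
          omega
        have := ih (derivative χ) hd0 (by omega) (by omega) m hdd
        omega
open Polynomial Finset

variable {F : Type} [Field F]

/-- The `k`-th chunk of size `M` of a polynomial. -/
noncomputable def chunk (M k : ℕ) (c : F[X]) : F[X] :=
  ∑ i ∈ range M, C (c.coeff (M*k + i)) * X^i

lemma chunk_coeff (M k : ℕ) (c : F[X]) (i : ℕ) :
    (chunk M k c).coeff i = if i < M then c.coeff (M*k+i) else 0 := by
  unfold chunk
  rw [finset_sum_coeff]
  simp only [C_mul_X_pow_eq_monomial, coeff_monomial]
  rw [Finset.sum_ite_eq' (range M) i (fun j => c.coeff (M*k+j))]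
  simp [Finset.mem_range]

lemma chunk_natDegree_lt (M k : ℕ) (hM : 0 < M) (c : F[X]) : (chunk M k c).natDegree < M := by
  by_cases h : chunk M k c = 0
  · rw [h, natDegree_zero]; exact hM
  · rw [natDegree_lt_iff_degree_lt h, degree_lt_iff_coeff_zero]
    intro i hi
    rw [chunk_coeff, if_neg (by exact_mod_cast not_lt.mpr hi)]

lemma chunk_decomp (M B : ℕ) (hM : 0 < M) (c : F[X]) (hdeg : c.natDegree < B*M) :
    c = ∑ k ∈ range B, chunk M k c * X^(M*k) := by
  ext t
  rw [finset_sum_coeff]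
  simp only [coeff_mul_X_pow', chunk_coeff]
  by_cases ht : t < B*M
  · have hdm := Nat.div_add_mod t M
    have hmod : t % M < M := Nat.mod_lt _ hM
    have hdivB : t / M < B := by
      rw [Nat.div_lt_iff_lt_mul hM]; omega
    rw [Finset.sum_eq_single (t/M)]
    · rw [if_pos (by omega), if_pos (by omega)]
      congr 1
      omega
    · intro k hk hne
      by_cases h1 : M*k ≤ t
      · rw [if_pos h1]
        rw [if_neg]
        intro h2
        apply hne
        have hc : k * M = M * k := Nat.mul_comm k M
        have : t / M = k := Nat.div_eq_of_lt_le (by omega) (by rw [add_mul, one_mul]; omega)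
        omega
      · rw [if_neg h1]
    · intro h
      exact absurd (Finset.mem_range.mpr hdivB) h
  · rw [coeff_eq_zero_of_natDegree_lt (by omega)]
    symm
    apply Finset.sum_eq_zero
    intro k hk
    have hk' : k < B := Finset.mem_range.mp hk
    by_cases h1 : M*k ≤ t
    · rw [if_pos h1, if_neg (by
        intro h2
        have : M * k + M ≤ M * B := by
          have : k + 1 ≤ B := hk'
          calc M * k + M = M * (k+1) := by ring
            _ ≤ M * B := Nat.mul_le_mul_left M this
        have hBM : M * B = B * M := Nat.mul_comm M B
        omega)]
    · rw [if_neg h1]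

lemma chunk_support_card (M B : ℕ) (hM : 0 < M) (c : F[X]) (hdeg : c.natDegree < B*M) :
    c.support.card = ∑ k ∈ range B, (chunk M k c).support.card := by
  classical
  have himg : c.support
      = (range B).biUnion (fun k => (chunk M k c).support.image (fun i => M*k+i)) := by
    ext t
    simp only [mem_support_iff, Finset.mem_biUnion, Finset.mem_image, chunk_coeff]
    constructor
    · intro h
      have htlt : t < B*M := lt_of_le_of_lt (le_natDegree_of_ne_zero h) hdeg
      have hdm := Nat.div_add_mod t M
      have hmod : t % M < M := Nat.mod_lt _ hM
      refine ⟨t / M, Finset.mem_range.mpr (by rw [Nat.div_lt_iff_lt_mul hM]; omega),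
        t % M, ?_, by omega⟩
      rw [if_pos hmod]
      have : M * (t/M) + t % M = t := by omega
      rw [this]; exact h
    · rintro ⟨k, hk, i, hi, rfl⟩
      by_cases h2 : i < M
      · rw [if_pos h2] at hi; exact hi
      · rw [if_neg h2] at hi; exact absurd rfl hi
  rw [himg, Finset.card_biUnion]
  · apply Finset.sum_congr rfl
    intro k _
    exact Finset.card_image_of_injective _ (fun a b h => by omega)
  · intro k hk k' hk' hne
    rw [Function.onFun, Finset.disjoint_left]
    intro t htk htk'
    simp only [Finset.mem_image, mem_support_iff, chunk_coeff] at htk htk'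
    obtain ⟨i, hi, rfl⟩ := htk
    obtain ⟨i', hi', heq⟩ := htk'
    have h2 : i < M := by by_contra h; rw [if_neg h] at hi; exact hi rfl
    have h2' : i' < M := by by_contra h; rw [if_neg h] at hi'; exact hi' rfl
    apply hne
    have : (M*k'+i')/M = (M*k+i)/M := by rw [heq]
    rw [Nat.mul_add_div hM, Nat.mul_add_div hM, Nat.div_eq_of_lt h2, Nat.div_eq_of_lt h2'] at this
    omega

/-- Pascal/binomial transform identity. -/
lemma pascal_sum {R : Type*} [CommRing R] (m : ℕ) (y w : R) (e : ℕ → R) :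
    ∑ j ∈ range m, (∑ k ∈ range m, (Nat.choose k j : R) * w^(k-j) * e k) * y^j
      = ∑ k ∈ range m, e k * (y + w)^k := by
  have h1 : ∀ k ∈ range m,
      (∑ j ∈ range m, (Nat.choose k j : R) * w^(k-j) * y^j) = (y+w)^k := by
    intro k hk
    rw [add_pow]
    rw [← Finset.sum_subset (Finset.range_subset_range.mpr (Finset.mem_range.mp hk))
      (fun j _ hj2 => by
        rw [Nat.choose_eq_zero_of_lt (by simpa using hj2)]
        push_cast; ring)]
    apply Finset.sum_congr rfl
    intro j _
    ring
  calc ∑ j ∈ range m, (∑ k ∈ range m, (Nat.choose k j : R) * w^(k-j) * e k) * y^j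
      = ∑ j ∈ range m, ∑ k ∈ range m, (Nat.choose k j : R) * w^(k-j) * e k * y^j := by
        apply Finset.sum_congr rfl; intro j _; rw [Finset.sum_mul]
    _ = ∑ k ∈ range m, ∑ j ∈ range m, (Nat.choose k j : R) * w^(k-j) * e k * y^j :=
        Finset.sum_comm
    _ = ∑ k ∈ range m, e k * ∑ j ∈ range m, (Nat.choose k j : R) * w^(k-j) * y^j := by
        apply Finset.sum_congr rfl; intro k _
        rw [Finset.mul_sum]
        apply Finset.sum_congr rfl; intro j _; ring
    _ = ∑ k ∈ range m, e k * (y+w)^k := by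
        apply Finset.sum_congr rfl; intro k hk; rw [h1 k hk]

/-- Valuation of base-`f^e` digits. -/
lemma digit_valuation (f : F[X]) (hf : f.Monic) (hfd : 0 < f.natDegree) (e : ℕ) :
    ∀ (m t : ℕ) (d : ℕ → F[X]),
    (∀ j, (d j).natDegree < f.natDegree * e ∨ d j = 0) →
    f^t ∣ ∑ j ∈ range m, d j * (f^e)^j →
    ∀ j < m, f^(t - j*e) ∣ d j := by
  intro m
  induction m with
  | zero => intro t d _ _ j hj; omega
  | succ m ih =>
    intro t d hdeg hdvd j hj
    rw [Finset.sum_range_succ'] at hdvd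
    have hre : ∑ j ∈ range m, d (j+1) * (f^e)^(j+1) + d 0 * (f^e)^0
        = f^e * (∑ j ∈ range m, d (j+1) * (f^e)^j) + d 0 := by
      rw [pow_zero, mul_one, Finset.mul_sum]
      congr 1
      apply Finset.sum_congr rfl
      intro j _
      ring
    rw [hre] at hdvd
    by_cases hte : t ≤ e
    · cases j with
      | zero =>
        have h1 : f^t ∣ f^e * (∑ j ∈ range m, d (j+1) * (f^e)^j) :=
          ((pow_dvd_pow f hte).mul_right _)
        have := dvd_sub hdvd h1
        simpa using this
      | succ j' =>
        have : t - (j'+1)*e = 0 := by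
          have : e ≤ (j'+1)*e := by nlinarith
          omega
        rw [this, pow_zero]
        exact one_dvd _
    · have h0 : f^e ∣ d 0 := by
        have h1 : f^e ∣ f^e * (∑ j ∈ range m, d (j+1) * (f^e)^j) := Dvd.intro _ rfl
        have h2 : f^e ∣ f^e * _ + d 0 := (pow_dvd_pow f (by omega)).trans hdvd
        simpa using dvd_sub h2 h1
      have hd00 : d 0 = 0 := by
        rcases hdeg 0 with h | h
        · by_contra hne
          have := natDegree_le_of_dvd h0 hne
          rw [natDegree_pow] at this
          have : f.natDegree * e = e * f.natDegree := Nat.mul_comm _ _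
          omega
        · exact h
      rw [hd00, add_zero] at hdvd
      have hu : f^(t-e) ∣ ∑ j ∈ range m, d (j+1) * (f^e)^j := by
        have h2 : f^e * f^(t-e) ∣ f^e * ∑ j ∈ range m, d (j+1) * (f^e)^j := by
          rw [← pow_add]
          have : e + (t - e) = t := by omega
          rw [this]; exact hdvd
        exact (mul_dvd_mul_iff_left (pow_ne_zero e hf.ne_zero)).mp h2
      cases j with
      | zero => rw [hd00]; exact dvd_zero _
      | succ j' =>
        have hres := ih (t-e) (fun j => d (j+1)) (fun j => hdeg (j+1)) hu j' (by omega)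
        have e2 : t - e - j'*e = t - (j'+1)*e := by
          rw [Nat.succ_mul]; omega
        rw [e2] at hres
        exact hres

section Key
variable {F : Type} [Field F]

lemma coeff_sum_C_X (m : ℕ) (v : ℕ → F) (u : ℕ) :
    (∑ k ∈ range m, C (v k) * X^k).coeff u = if u < m then v u else 0 := by
  rw [finset_sum_coeff]
  simp only [C_mul_X_pow_eq_monomial, coeff_monomial]
  rw [Finset.sum_ite_eq' (range m) u v]
  simp [Finset.mem_range]

/-- The key lower bound on Hamming weights. -/
lemma key_lower {p : ℕ} (hp : p.Prime) [CharP F p] {n : ℕ} (hn : 0 < n)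
    {θ : F} (hθ : θ ≠ 0) :
    ∀ s (t : ℕ) (c : F[X]), c ≠ 0 → c.natDegree < n * p^s →
    (X^n - C θ)^t ∣ c → Dfun p s t ≤ c.support.card := by
  have hp2 : 2 ≤ p := hp.two_le
  have hfact : Fact p.Prime := ⟨hp⟩
  intro s
  induction s with
  | zero =>
    intro t c hc _ _
    calc Dfun p 0 t = 1 := rfl
      _ ≤ c.support.card := Nat.one_le_iff_ne_zero.mpr
          (Finset.card_ne_zero_of_mem (natDegree_mem_support_of_nonzero hc))
  | succ s ih =>
    intro t c hc hdeg hdvd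
    set f : F[X] := X^n - C θ with hfdef
    have hfm : f.Monic := monic_X_pow_sub_C θ hn.ne'
    have hfnd : f.natDegree = n := natDegree_X_pow_sub_C
    have hf0 : f ≠ 0 := hfm.ne_zero
    set M : ℕ := n * p^s with hMdef
    have hps0 : 0 < p^s := pow_pos (by omega) _
    have hM : 0 < M := Nat.mul_pos hn hps0
    set b : F := θ^(p^s) with hbdef
    have hb : b ≠ 0 := pow_ne_zero _ hθ
    have hfrob : f^(p^s) = X^M - C b := by
      rw [hfdef, sub_pow_char_pow, ← pow_mul, hMdef, hbdef, map_pow]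
    have htlt : t < p^(s+1) := by
      have h1 := natDegree_le_of_dvd hdvd hc
      rw [natDegree_pow, hfnd] at h1
      have h2 : t * n < n * p^(s+1) := lt_of_le_of_lt h1 hdeg
      by_contra hcon
      push_neg at hcon
      have : n * p^(s+1) ≤ t * n := by
        calc n * p^(s+1) = p^(s+1) * n := Nat.mul_comm _ _
          _ ≤ t * n := Nat.mul_le_mul_right n hcon
      omega
    have hdegc : c.natDegree < p * M := by
      have : n * p^(s+1) = p * M := by rw [hMdef, pow_succ]; ring
      omega
    -- chunks
    set ec : ℕ → F[X] := fun k => chunk M k c with hecdef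
    have hecim : c = ∑ k ∈ range p, ec k * X^(M*k) := chunk_decomp M p hM c (by omega)
    have hecdeg : ∀ k, (ec k).natDegree < M := fun k => chunk_natDegree_lt M k hM c
    have hwc : c.support.card = ∑ k ∈ range p, (ec k).support.card :=
      chunk_support_card M p hM c (by omega)
    -- digits
    set d : ℕ → F[X] := fun j => ∑ k ∈ range p, (Nat.choose k j : F[X]) * (C b)^(k-j) * ec k
      with hddef
    have hCC : ∀ k j : ℕ, (Nat.choose k j : F[X]) * (C b)^(k-j)
        = C ((Nat.choose k j : F) * b^(k-j)) := by
      intro k j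
      symm
      rw [C_mul, map_pow, C_eq_natCast]
    have hdcoeff : ∀ j i, (d j).coeff i
        = ∑ k ∈ range p, (Nat.choose k j : F) * b^(k-j) * (ec k).coeff i := by
      intro j i
      rw [hddef, finset_sum_coeff]
      apply Finset.sum_congr rfl
      intro k _
      rw [hCC, coeff_C_mul]
    have hcd : c = ∑ j ∈ range p, d j * (f^(p^s))^j := by
      have hpsum := pascal_sum (R := F[X]) p (f^(p^s)) (C b) (fun k => ec k)
      have hfb : f^(p^s) + C b = X^M := by rw [hfrob]; ring
      rw [hfb] at hpsum
      have hXk : ∑ k ∈ range p, ec k * (X^M : F[X])^k = ∑ k ∈ range p, ec k * X^(M*k) := by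
        apply Finset.sum_congr rfl
        intro k _
        rw [← pow_mul]
      rw [hecim, ← hXk, ← hpsum]
    -- valuations of digits
    have hddeg : ∀ j, (d j).natDegree < M := by
      intro j
      have hbound : (∑ k ∈ range p, (Nat.choose k j : F[X]) * (C b)^(k-j) * ec k).natDegree
          ≤ M - 1 := by
        apply natDegree_sum_le_of_forall_le
        intro k _
        rw [hCC]
        refine le_trans (natDegree_C_mul_le _ _) ?_
        have := hecdeg k
        omega
      have heq : d j = ∑ k ∈ range p, (Nat.choose k j : F[X]) * (C b)^(k-j) * ec k := rfl
      rw [heq]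
      omega
    have hval : ∀ j < p, f^(t - j*p^s) ∣ d j := by
      apply digit_valuation f hfm (by omega) (p^s) p t d
      · intro j
        left
        rw [hfnd]
        rw [← hMdef]
        exact hddeg j
      · rw [← hcd]; exact hdvd
    obtain ⟨ℓ, r, hdm, hrlt⟩ : ∃ L R, p^s * L + R = t ∧ R < p^s :=
      ⟨t/p^s, t%p^s, Nat.div_add_mod t _, Nat.mod_lt _ hps0⟩
    have hc1 : p^s * p = p * p^s := Nat.mul_comm _ _
    have hc2 : p^s * ℓ = ℓ * p^s := Nat.mul_comm _ _
    have hlp : ℓ < p := by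
      have h1 : t < p^s * p := by rw [← pow_succ]; exact htlt
      have h2 : p^s * ℓ < p^s * p := by omega
      exact lt_of_mul_lt_mul_left h2 (Nat.zero_le _)
    have hdl : ∀ j, j < ℓ → d j = 0 := by
      intro j hj
      have hjexp : p^s ≤ t - j*p^s := by
        have h1 : (j+1) * p^s ≤ ℓ * p^s := Nat.mul_le_mul_right _ (by omega)
        have h2 : ℓ * p^s = p^s * ℓ := Nat.mul_comm _ _
        rw [add_mul, one_mul] at h1
        omega
      have hdv : f^(p^s) ∣ d j := (pow_dvd_pow f hjexp).trans (hval j (by omega))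
      by_contra hne
      have := natDegree_le_of_dvd hdv hne
      rw [natDegree_pow, hfnd] at this
      have h3 : p^s * n = n * p^s := Nat.mul_comm _ _
      have := hddeg j
      omega
    have hvr : f^r ∣ d ℓ := by
      have : t - ℓ*p^s = r := by
        have : ℓ * p^s = p^s * ℓ := Nat.mul_comm _ _
        omega
      rw [← this]
      exact hval ℓ hlp
    -- the scalar polynomials χ i
    set χ : ℕ → F[X] := fun i => ∑ k ∈ range p, C ((ec k).coeff i) * X^k with hχdef
    have hχcoeff : ∀ i u, (χ i).coeff u = if u < p then (ec u).coeff i else 0 := by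
      intro i u
      rw [hχdef]
      exact coeff_sum_C_X p (fun k => (ec k).coeff i) u
    have hχdeg : ∀ i, (χ i).natDegree < p := by
      intro i
      by_cases h : χ i = 0
      · rw [h, natDegree_zero]; omega
      · rw [natDegree_lt_iff_degree_lt h, degree_lt_iff_coeff_zero]
        intro u hu
        rw [hχcoeff, if_neg (by exact_mod_cast not_lt.mpr hu)]
    have hχeq : ∀ i, χ i = ∑ j ∈ range p, C ((d j).coeff i) * (X - C b)^j := by
      intro i
      have hpsum := pascal_sum (R := F[X]) p (X - C b) (C b)
        (fun k => C ((ec k).coeff i))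
      have hXb : (X - C b) + C b = (X : F[X]) := by ring
      rw [hXb] at hpsum
      rw [hχdef]
      simp only []
      rw [← hpsum]
      apply Finset.sum_congr rfl
      intro j _
      congr 1
      rw [hdcoeff, map_sum]
      apply Finset.sum_congr rfl
      intro k _
      rw [C_mul, ← hCC]
    have hχdvd : ∀ L, (∀ j, j < L → d j = 0) → ∀ i, (X - C b)^L ∣ χ i := by
      intro L hdz i
      rw [hχeq i]
      apply Finset.dvd_sum
      intro j _
      by_cases hj : j < L
      · rw [hdz j hj, coeff_zero, map_zero, zero_mul]
        exact dvd_zero _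
      · exact ((pow_dvd_pow _ (by omega)).mul_left _)
    -- the nonzero-chunk index set
    classical
    set K : Finset ℕ := (range p).filter (fun k => ec k ≠ 0) with hKdef
    have hKp : K.card ≤ p := le_trans (Finset.card_filter_le _ _) (by rw [Finset.card_range])
    have hχsupp : ∀ i, (χ i).support ⊆ K := by
      intro i u hu
      rw [mem_support_iff, hχcoeff] at hu
      by_cases h : u < p
      · rw [if_pos h] at hu
        rw [hKdef]
        exact Finset.mem_filter.mpr ⟨Finset.mem_range.mpr h,
          fun h0 => hu (by rw [h0, coeff_zero])⟩
      · rw [if_neg h] at hu; exact absurd rfl hu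
    have hwcK : c.support.card = ∑ k ∈ K, (ec k).support.card := by
      rw [hwc, hKdef]
      rw [Finset.sum_filter_of_ne]
      intro k _ hne
      intro h0
      rw [h0] at hne
      simp at hne
    have hKcard_le_w : K.card ≤ c.support.card := by
      rw [hwcK]
      calc K.card = ∑ _k ∈ K, 1 := by rw [Finset.sum_const, smul_eq_mul, mul_one]
        _ ≤ ∑ k ∈ K, (ec k).support.card := Finset.sum_le_sum (fun k hk => by
            rw [hKdef] at hk
            exact Nat.one_le_iff_ne_zero.mpr (fun h => (Finset.mem_filter.mp hk).2
              (by rwa [Finset.card_eq_zero, support_eq_empty] at h)))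
    have hKge : ∀ L, (∀ j, j < L → d j = 0) → L < K.card := by
      intro L hdz
      have hex : ∃ k i, k < p ∧ (ec k).coeff i ≠ 0 := by
        by_contra hcon
        push_neg at hcon
        apply hc
        rw [hecim]
        apply Finset.sum_eq_zero
        intro k hk
        have : ec k = 0 := by
          ext i
          rw [coeff_zero]
          exact hcon k i (Finset.mem_range.mp hk)
        rw [this, zero_mul]
      obtain ⟨k₁, i₁, hk₁, hne₁⟩ := hex
      have hχne : χ i₁ ≠ 0 := by
        intro h
        apply hne₁
        have := hχcoeff i₁ k₁
        rw [h, coeff_zero, if_pos hk₁] at this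
        exact this.symm
      have hsp := sparse_lemma hp hb (χ i₁).natDegree (χ i₁) hχne le_rfl (hχdeg i₁)
        L (hχdvd L hdz i₁)
      exact lt_of_lt_of_le hsp (Finset.card_le_card (hχsupp i₁))
    -- Now the case analysis
    by_cases hr0 : r = 0
    · -- Dfun ≤ ℓ + 1 ≤ K.card
      have hK1 := hKge ℓ hdl
      have hDle : Dfun p (s+1) t ≤ ℓ + 1 := by
        by_cases ht0 : t = 0
        · rw [ht0, Dfun_zero]; omega
        · have hl1 : 1 ≤ ℓ := by
            rcases Nat.eq_zero_or_pos ℓ with h | h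
            · exfalso; apply ht0; rw [h, Nat.mul_zero] at hdm; omega
            · exact h
          have hle : t ≤ (p-1) * p^s := by
            have : t = ℓ * p^s := by
              have := Nat.mul_comm (p^s) ℓ
              omega
            rw [this]
            exact Nat.mul_le_mul_right _ (by omega)
          rw [Dfun_succ_mid p s t ht0 hle]
          have hdiv : (t-1)/p^s = ℓ - 1 := by
            apply Nat.div_eq_of_lt_le
            · have h1 : (ℓ-1) * p^s + p^s = ℓ * p^s := by
                have : (ℓ-1) + 1 = ℓ := by omega
                calc (ℓ-1) * p^s + p^s = ((ℓ-1)+1) * p^s := by ring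
                  _ = ℓ * p^s := by rw [this]
              have h2 : ℓ * p^s = p^s * ℓ := Nat.mul_comm _ _
              omega
            · have h1 : (ℓ-1+1) * p^s = ℓ * p^s := by
                congr 1; omega
              have h2 : ℓ * p^s = p^s * ℓ := Nat.mul_comm _ _
              omega
          omega
      omega
    · -- r ≥ 1
      have hr1 : 1 ≤ r := by omega
      by_cases hdl0 : d ℓ = 0
      · -- all digits up to ℓ vanish; K.card ≥ ℓ + 2
        have hK2 : ℓ + 1 < K.card := by
          apply hKge (ℓ+1)
          intro j hj
          rcases Nat.lt_or_ge j ℓ with h | h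
          · exact hdl j h
          · have : j = ℓ := by omega
            rw [this]; exact hdl0
        have hlp2 : ℓ ≤ p - 2 := by omega
        have hDeq : Dfun p (s+1) t = ℓ + 2 := by
          rw [Dfun_succ_mid p s t (by omega)]
          · have hdiv : (t-1)/p^s = ℓ := by
              apply Nat.div_eq_of_lt_le
              · have h2 : ℓ * p^s = p^s * ℓ := Nat.mul_comm _ _
                omega
              · have h1 : (ℓ+1) * p^s = ℓ * p^s + p^s := by ring
                have h2 : ℓ * p^s = p^s * ℓ := Nat.mul_comm _ _
                omega
            omega
          · have h1 : (ℓ+1) * p^s ≤ (p-1) * p^s := Nat.mul_le_mul_right _ (by omega)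
            have h2 : (ℓ+1) * p^s = ℓ * p^s + p^s := by ring
            have h3 : ℓ * p^s = p^s * ℓ := Nat.mul_comm _ _
            omega
        omega
      · by_cases hK : ℓ + 2 ≤ K.card
        · -- Dfun = ℓ+2 ≤ K.card
          have hlp2 : ℓ ≤ p - 2 := by omega
          have hDeq : Dfun p (s+1) t = ℓ + 2 := by
            rw [Dfun_succ_mid p s t (by omega)]
            · have hdiv : (t-1)/p^s = ℓ := by
                apply Nat.div_eq_of_lt_le
                · have h2 : ℓ * p^s = p^s * ℓ := Nat.mul_comm _ _
                  omega
                · have h1 : (ℓ+1) * p^s = ℓ * p^s + p^s := by ring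
                  have h2 : ℓ * p^s = p^s * ℓ := Nat.mul_comm _ _
                  omega
              omega
            · have h1 : (ℓ+1) * p^s ≤ (p-1) * p^s := Nat.mul_le_mul_right _ (by omega)
              have h2 : (ℓ+1) * p^s = ℓ * p^s + p^s := by ring
              have h3 : ℓ * p^s = p^s * ℓ := Nat.mul_comm _ _
              omega
          omega
        · -- K.card = ℓ + 1 : the proportionality argument
          have hK1 := hKge ℓ hdl
          have hKeq : K.card = ℓ + 1 := by omega
          -- choose k* ∈ K and i₀
          have hKne : K.Nonempty := Finset.card_pos.mp (by omega)
          obtain ⟨ks, hks⟩ := hKne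
          have hecks : ec ks ≠ 0 := (Finset.mem_filter.mp hks).2
          have hksp : ks < p := Finset.mem_range.mp (Finset.mem_filter.mp hks).1
          obtain ⟨i₀, hi₀⟩ : ∃ i₀, (ec ks).coeff i₀ ≠ 0 := by
            by_contra hcon
            push_neg at hcon
            exact hecks (by ext i; rw [coeff_zero]; exact hcon i)
          set ξ : F[X] := χ i₀ with hξdef
          set α : F := (ec ks).coeff i₀ with hαdef
          have hα : α ≠ 0 := hi₀
          have hξks : ξ.coeff ks = α := by
            rw [hξdef, hχcoeff, if_pos hksp]
          -- zero test
          have hZ : ∀ ψ : F[X], ψ.support ⊆ K → (X - C b)^ℓ ∣ ψ → ψ.coeff ks = 0 →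
              ψ = 0 := by
            intro ψ hsupp hdvdψ hcks
            by_contra hψ
            have hdegψ : ψ.natDegree < p := by
              have := hsupp (natDegree_mem_support_of_nonzero hψ)
              rw [hKdef] at this
              exact Finset.mem_range.mp (Finset.mem_filter.mp this).1
            have hsp := sparse_lemma hp hb ψ.natDegree ψ hψ le_rfl hdegψ ℓ hdvdψ
            have hsub : ψ.support ⊆ K.erase ks := by
              intro u hu
              refine Finset.mem_erase.mpr ⟨?_, hsupp hu⟩
              intro h
              rw [mem_support_iff, h] at hu
              exact hu hcks
            have := Finset.card_le_card hsub
            rw [Finset.card_erase_of_mem hks] at this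
            omega
          -- proportionality of all χ i to ξ
          have hprop : ∀ i, C α * χ i = C ((χ i).coeff ks) * ξ := by
            intro i
            have h0 : (C α * χ i - C ((χ i).coeff ks) * ξ) = 0 := by
              apply hZ
              · intro u hu
                rw [mem_support_iff] at hu
                by_cases h1 : u ∈ K
                · exact h1
                · exfalso
                  apply hu
                  have hu1 : (χ i).coeff u = 0 := by
                    by_contra h2
                    exact h1 (hχsupp i (mem_support_iff.mpr h2))
                  have hu2 : ξ.coeff u = 0 := by
                    by_contra h2
                    exact h1 (hχsupp i₀ (mem_support_iff.mpr h2))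
                  rw [coeff_sub, coeff_C_mul, coeff_C_mul, hu1, hu2]
                  ring
              · exact dvd_sub ((hχdvd ℓ hdl i).mul_left _) ((hχdvd ℓ hdl i₀).mul_left _)
              · rw [coeff_sub, coeff_C_mul, coeff_C_mul, hξks]
                ring
            have := sub_eq_zero.mp h0
            exact this
          -- coefficient identity
          have hcoeffid : ∀ i k, k < p →
              α * (ec k).coeff i = (ec k).coeff i₀ * (ec ks).coeff i := by
            intro i k hkp
            have := congrArg (fun ψ => ψ.coeff k) (hprop i)
            simp only [coeff_C_mul] at this
            rw [hχcoeff, hχcoeff, hξdef, hχcoeff, if_pos hkp, if_pos hkp, if_pos hksp]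
              at this
            -- this : α * (ec k).coeff i = (ec ks).coeff i * (ec k).coeff i₀
            rw [this]; ring
          -- chunk proportionality
          have hecprop : ∀ k, k < p → ec k = C ((ec k).coeff i₀ * α⁻¹) * ec ks := by
            intro k hkp
            ext i
            rw [coeff_C_mul]
            have := hcoeffid i k hkp
            field_simp
            calc (ec k).coeff i * α = α * (ec k).coeff i := by ring
              _ = (ec k).coeff i₀ * (ec ks).coeff i := this
              _ = (ec k).coeff i₀ * (ec ks).coeff i := rfl
          -- d ℓ = C μ * ec ks
          set μ : F := ∑ k ∈ range p, (Nat.choose k ℓ : F) * b^(k-ℓ) * ((ec k).coeff i₀ * α⁻¹)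
            with hμdef
          have hdμ : d ℓ = C μ * ec ks := by
            rw [hddef]
            simp only []
            rw [hμdef, map_sum, Finset.sum_mul]
            apply Finset.sum_congr rfl
            intro k hk
            conv_lhs => rw [hCC, hecprop k (Finset.mem_range.mp hk)]
            rw [← mul_assoc, ← C_mul]
          have hμ0 : μ ≠ 0 := by
            intro h
            apply hdl0
            rw [hdμ, h, map_zero, zero_mul]
          have hrdvd : f^r ∣ ec ks := by
            have h1 : ec ks = C μ⁻¹ * d ℓ := by
              rw [hdμ, ← mul_assoc, ← C_mul, inv_mul_cancel₀ hμ0, C_1, one_mul]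
            rw [h1]
            exact hvr.mul_left _
          have hIH : Dfun p s r ≤ (ec ks).support.card :=
            ih r (ec ks) hecks (hecdeg ks) hrdvd
          have hD2 : 2 ≤ Dfun p s r := Dfun_two p s r hp2 hr1 hrlt
          -- total weight
          have hwtot : c.support.card = (ℓ+1) * (ec ks).support.card := by
            rw [hwcK]
            have : ∀ k ∈ K, (ec k).support.card = (ec ks).support.card := by
              intro k hk
              have hkp : k < p := Finset.mem_range.mp (Finset.mem_filter.mp hk).1
              rw [hecprop k hkp]
              apply card_support_C_mul
              intro h
              apply (Finset.mem_filter.mp hk).2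
              rw [hecprop k hkp, h, map_zero, zero_mul]
            rw [Finset.sum_congr rfl this, Finset.sum_const, hKeq, smul_eq_mul]
          -- conclude
          rw [hwtot]
          rcases Nat.lt_or_ge ℓ (p-1) with hcase | hcase
          · -- ℓ ≤ p - 2 : Dfun = ℓ+2 ≤ (ℓ+1)*2 ≤ (ℓ+1)*Dfun p s r
            have hDeq : Dfun p (s+1) t = ℓ + 2 := by
              rw [Dfun_succ_mid p s t (by omega)]
              · have hdiv : (t-1)/p^s = ℓ := by
                  apply Nat.div_eq_of_lt_le
                  · have h2 : ℓ * p^s = p^s * ℓ := Nat.mul_comm _ _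
                    omega
                  · have h1 : (ℓ+1) * p^s = ℓ * p^s + p^s := by ring
                    have h2 : ℓ * p^s = p^s * ℓ := Nat.mul_comm _ _
                    omega
                omega
              · have h1 : (ℓ+1) * p^s ≤ (p-1) * p^s := Nat.mul_le_mul_right _ (by omega)
                have h2 : (ℓ+1) * p^s = ℓ * p^s + p^s := by ring
                have h3 : ℓ * p^s = p^s * ℓ := Nat.mul_comm _ _
                omega
            rw [hDeq]
            calc ℓ + 2 ≤ (ℓ+1) * 2 := by omega
              _ ≤ (ℓ+1) * Dfun p s r := Nat.mul_le_mul_left _ hD2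
              _ ≤ (ℓ+1) * (ec ks).support.card := Nat.mul_le_mul_left _ hIH
          · -- ℓ = p - 1 : Dfun = p * Dfun p s r
            have hleq : ℓ = p - 1 := by omega
            have htgt : ¬ t ≤ (p-1) * p^s := by
              have h1 : (p-1) * p^s = ℓ * p^s := by rw [hleq]
              have h2 : ℓ * p^s = p^s * ℓ := Nat.mul_comm _ _
              omega
            have harg : t - (p-1)*p^s = r := by
              have h1 : (p-1) * p^s = ℓ * p^s := by rw [hleq]
              omega
            have hDeq : Dfun p (s+1) t = p * Dfun p s r := by
              rw [Dfun_succ_high p s t (by omega) htgt, harg]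
            rw [hDeq]
            exact Nat.mul_le_mul (by omega) hIH

end Key

section Witness
variable {F : Type} [Field F]

lemma choose_cast_ne_zero {p : ℕ} (hp : p.Prime) [CharP F p] {j i : ℕ} (hj : j < p)
    (hi : i ≤ j) : (Nat.choose j i : F) ≠ 0 := by
  rw [Ne, CharP.cast_eq_zero_iff F p]
  intro hdvd
  have h1 : Nat.choose j i ∣ j.factorial := by
    have := Nat.choose_mul_factorial_mul_factorial hi
    exact ⟨i.factorial * (j - i).factorial, by rw [← this]; ring⟩
  have h2 : p ∣ j.factorial := hdvd.trans h1
  have := (Nat.Prime.dvd_factorial hp).mp h2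
  omega

lemma frob_pow {p : ℕ} (hp : p.Prime) [CharP F p] (θ : F) (n e : ℕ) :
    (X^n - C θ : F[X])^(p^e) = X^(n*p^e) - C (θ^(p^e)) := by
  have : Fact p.Prime := ⟨hp⟩
  rw [sub_pow_char_pow, ← pow_mul, ← map_pow]

lemma binom_expand (β : F) (N j : ℕ) :
    (X^N - C β : F[X])^j
      = ∑ a ∈ range (j+1), C ((-β)^(j-a) * (Nat.choose j a : F)) * X^(N*a) := by
  rw [sub_eq_add_neg, ← map_neg, add_pow]
  apply Finset.sum_congr rfl
  intro a _
  rw [← pow_mul, ← map_pow, C_mul, C_eq_natCast]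
  ring

lemma binomial_card {p : ℕ} (hp : p.Prime) [CharP F p] {β : F} (hβ : β ≠ 0)
    (N j : ℕ) (hN : 0 < N) (hj : j < p) :
    ((X^N - C β : F[X])^j).support.card = j + 1 := by
  rw [binom_expand]
  rw [card_support_sum_monomials (range (j+1)) (fun a => N*a)
    (fun a => (-β)^(j-a) * (Nat.choose j a : F)) ?_ ?_]
  · rw [Finset.card_range]
  · intro a _ a' _ h
    exact Nat.eq_of_mul_eq_mul_left hN h
  · intro a ha
    apply mul_ne_zero
    · exact pow_ne_zero _ (neg_ne_zero.mpr hβ)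
    · exact choose_cast_ne_zero hp hj (by simpa using Nat.lt_succ_iff.mp (Finset.mem_range.mp ha))

lemma geom_expand {β : F} (hβ : β ≠ 0) (N q : ℕ) (hN : 0 < N) (hq : 1 ≤ q)
    (hpow : (X^N - C β : F[X])^q = X^(N*q) - C (β^q)) :
    (X^N - C β : F[X])^(q-1) = ∑ a ∈ range q, C (β^(q-1-a)) * X^(N*a) := by
  have hne : (X^N - C β : F[X]) ≠ 0 := (monic_X_pow_sub_C β hN.ne').ne_zero
  apply mul_left_cancel₀ hne
  have hlhs : (X^N - C β : F[X]) * (X^N - C β)^(q-1) = (X^N - C β)^q := by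
    rw [← pow_succ']
    congr 1
    omega
  rw [hlhs, hpow, Finset.mul_sum]
  have htel : ∀ a ∈ range q,
      (X^N - C β : F[X]) * (C (β^(q-1-a)) * X^(N*a))
        = (fun a => C (β^(q-a)) * X^(N*a)) (a+1) - (fun a => C (β^(q-a)) * X^(N*a)) a := by
    intro a ha
    have halt : a < q := Finset.mem_range.mp ha
    simp only []
    rw [sub_mul]
    congr 1
    · rw [show N*(a+1) = N*a + N by ring, pow_add]
      have e1 : q - 1 - a = q - (a+1) := by omega
      rw [e1]
      ring
    · rw [← mul_assoc, ← C_mul, ← pow_succ']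
      have e2 : q - 1 - a + 1 = q - a := by omega
      rw [e2]
  rw [Finset.sum_congr rfl htel, Finset.sum_range_sub (fun a => C (β^(q-a)) * X^(N*a)) q]
  simp

/-- support cardinality of the witness codeword in the middle range -/
lemma witness_mid_card {p : ℕ} (hp : p.Prime) [CharP F p] {θ : F} (hθ : θ ≠ 0)
    {n : ℕ} (hn : 0 < n) (s ℓ : ℕ) (hs : 1 ≤ s) (hℓ : ℓ + 1 < p) :
    ((X^n - C θ : F[X])^((ℓ+1) * p^(s-1))).support.card = ℓ + 2 := by
  have h1 : ((ℓ+1) * p^(s-1)) = p^(s-1) * (ℓ+1) := Nat.mul_comm _ _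
  rw [h1, pow_mul, frob_pow hp]
  have hN : 0 < n * p^(s-1) := Nat.mul_pos hn (pow_pos hp.pos _)
  rw [binomial_card hp (pow_ne_zero _ hθ) _ _ hN hℓ]

/-- support cardinality of the witness codeword in the high range -/
lemma witness_high_card {p : ℕ} (hp : p.Prime) [CharP F p] {θ : F} (hθ : θ ≠ 0)
    {n : ℕ} (hn : 0 < n) (s k i : ℕ) (hk1 : 1 ≤ k) (hks : k + 1 ≤ s)
    (hi1 : 1 ≤ i) (hip : i < p) :
    ((X^n - C θ : F[X])^(p^s - p^(s-k) + i * p^(s-k-1))).support.card = (i+1) * p^k := by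
  have hp2 : 2 ≤ p := hp.two_le
  have hppos : ∀ u : ℕ, 0 < p^u := fun u => pow_pos hp.pos _
  set N : ℕ := n * p^(s-k) with hNdef
  set N' : ℕ := n * p^(s-k-1) with hN'def
  set β : F := θ^(p^(s-k)) with hβdef
  set β' : F := θ^(p^(s-k-1)) with hβ'def
  have hβ : β ≠ 0 := pow_ne_zero _ hθ
  have hβ' : β' ≠ 0 := pow_ne_zero _ hθ
  have hNpos : 0 < N := Nat.mul_pos hn (hppos _)
  have hN'pos : 0 < N' := Nat.mul_pos hn (hppos _)
  have hNN' : N = N' * p := by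
    rw [hNdef, hN'def, mul_assoc, ← pow_succ]
    congr 2
    omega
  have hsplit : p^s - p^(s-k) + i * p^(s-k-1) = p^(s-k) * (p^k - 1) + p^(s-k-1) * i := by
    have e1 : p^(s-k) * p^k = p^s := by rw [← pow_add]; congr 1; omega
    have e2 : p^(s-k) * (p^k - 1) = p^(s-k) * p^k - p^(s-k) := by
      rw [Nat.mul_sub, mul_one]
    have e3 : p^(s-k-1) * i = i * p^(s-k-1) := Nat.mul_comm _ _
    have := hppos (s-k)
    have := hppos k
    omega
  rw [hsplit, pow_add, pow_mul, pow_mul, frob_pow hp, frob_pow hp, ← hNdef, ← hN'def,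
    ← hβdef, ← hβ'def]
  -- expand both factors
  have hA : (X^N - C β : F[X])^(p^k - 1) = ∑ a ∈ range (p^k), C (β^(p^k-1-a)) * X^(N*a) :=
    geom_expand hβ N (p^k) hNpos (hppos k) (by rw [frob_pow hp])
  have hB : (X^(N') - C β' : F[X])^i
      = ∑ j ∈ range (i+1), C ((-β')^(i-j) * (Nat.choose i j : F)) * X^(N'*j) :=
    binom_expand β' N' i
  rw [hA, hB, Finset.sum_mul_sum]
  have hprod : ∑ a ∈ range (p^k), ∑ j ∈ range (i+1),
      (C (β^(p^k-1-a)) * X^(N*a)) * (C ((-β')^(i-j) * (Nat.choose i j : F)) * X^(N'*j))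
      = ∑ e ∈ (range (p^k)) ×ˢ (range (i+1)),
        C (β^(p^k-1-e.1) * ((-β')^(i-e.2) * (Nat.choose i e.2 : F))) * X^(N*e.1 + N'*e.2) := by
    rw [Finset.sum_product]
    apply Finset.sum_congr rfl
    intro a _
    apply Finset.sum_congr rfl
    intro j _
    rw [mul_mul_mul_comm, ← C_mul, ← pow_add]
  rw [hprod]
  refine Eq.trans (card_support_sum_monomials ((range (p^k)) ×ˢ (range (i+1)))
    (fun e => N*e.1 + N'*e.2)
    (fun e => β^(p^k-1-e.1) * ((-β')^(i-e.2) * (Nat.choose i e.2 : F))) ?_ ?_) ?_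
  case refine_3 =>
    rw [Finset.card_product, Finset.card_range, Finset.card_range]
    ring
  · rintro ⟨a, j⟩ ha ⟨a', j'⟩ ha' h
    simp only [Finset.mem_coe, Finset.mem_product, Finset.mem_range] at ha ha'
    simp only [] at h
    rw [hNN'] at h
    have h2 : N' * (p*a + j) = N' * (p*a' + j') := by
      have e : ∀ x y : ℕ, N' * (p*x + y) = N' * p * x + N' * y := by intro x y; ring
      rw [e, e]
      exact h
    have h3 : p*a + j = p*a' + j' := Nat.eq_of_mul_eq_mul_left hN'pos h2
    have hj : j < p := by omega
    have hj' : j' < p := by omega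
    have ha4 : (p*a+j)/p = a := by rw [Nat.mul_add_div hp.pos, Nat.div_eq_of_lt hj, add_zero]
    have ha4' : (p*a'+j')/p = a' := by rw [Nat.mul_add_div hp.pos, Nat.div_eq_of_lt hj', add_zero]
    have : a = a' := by rw [← ha4, ← ha4', h3]
    subst this
    have : j = j' := by omega
    subst this
    rfl
  · rintro ⟨a, j⟩ ha
    simp only [Finset.mem_product, Finset.mem_range] at ha
    apply mul_ne_zero (pow_ne_zero _ hβ)
    apply mul_ne_zero (pow_ne_zero _ (neg_ne_zero.mpr hβ'))
    exact choose_cast_ne_zero hp hip (by omega)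

end Witness

section Quot
variable {F : Type} [Field F]

lemma mk_polyRep {q : F[X]} (hq : q.Monic) (c : F[X] ⧸ Ideal.span {q}) :
    Ideal.Quotient.mk (Ideal.span {q}) (polyRep q c) = c := by
  unfold polyRep
  rw [modByMonic_eq_sub_mul_div _ q, map_sub, map_mul]
  rw [Ideal.Quotient.eq_zero_iff_mem.mpr (Ideal.mem_span_singleton_self q)]
  rw [zero_mul, sub_zero]
  exact Function.surjInv_eq Ideal.Quotient.mk_surjective c

lemma polyRep_mk {q : F[X]} (hq : q.Monic) (w : F[X])
    (hw : w.natDegree < q.natDegree) :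
    polyRep q (Ideal.Quotient.mk (Ideal.span {q}) w) = w := by
  have hmk : Ideal.Quotient.mk (Ideal.span {q})
      (Function.surjInv Ideal.Quotient.mk_surjective
        (Ideal.Quotient.mk (Ideal.span {q}) w)) = Ideal.Quotient.mk (Ideal.span {q}) w :=
    Function.surjInv_eq Ideal.Quotient.mk_surjective _
  have hdvd : q ∣ (Function.surjInv Ideal.Quotient.mk_surjective
      (Ideal.Quotient.mk (Ideal.span {q}) w) - w) :=
    Ideal.mem_span_singleton.mp (Ideal.Quotient.eq.mp hmk)
  have h1 := (modByMonic_eq_zero_iff_dvd hq).mpr hdvd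
  rw [sub_modByMonic, sub_eq_zero] at h1
  unfold polyRep
  rw [h1]
  exact (modByMonic_eq_self_iff hq).mpr (degree_lt_degree hw)

lemma natDegree_polyRep_lt {q : F[X]} (hq : q.Monic) (hq0 : 0 < q.natDegree)
    (c : F[X] ⧸ Ideal.span {q}) : (polyRep q c).natDegree < q.natDegree := by
  rcases eq_or_ne (polyRep q c) 0 with h | h
  · rw [h, natDegree_zero]; exact hq0
  · exact natDegree_lt_natDegree h (degree_modByMonic_lt _ hq)

/-- General computation of `dH` of the code generated by `mk g`. -/
lemma dH_eq_of {q : F[X]} (hq : q.Monic) (hq0 : 0 < q.natDegree) (g : F[X]) (D : ℕ)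
    (hgq : g ∣ q)
    (wit : ∃ w : F[X], w ≠ 0 ∧ w.natDegree < q.natDegree ∧ g ∣ w ∧ w.support.card = D)
    (low : ∀ v : F[X], v ≠ 0 → v.natDegree < q.natDegree → g ∣ v → D ≤ v.support.card) :
    dH q (Ideal.span {Ideal.Quotient.mk (Ideal.span {q}) g}) = D := by
  obtain ⟨w, hw0, hwdeg, hgw, hwD⟩ := wit
  have hwit : D ∈ {w : ℕ | ∃ c ∈ Ideal.span {Ideal.Quotient.mk (Ideal.span {q}) g},
      c ≠ 0 ∧ w = wH q c} := by
    refine ⟨Ideal.Quotient.mk (Ideal.span {q}) w, ?_, ?_, ?_⟩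
    · exact Ideal.mem_span_singleton.mpr ((Ideal.Quotient.mk _).map_dvd hgw)
    · intro h
      have hqw : q ∣ w := Ideal.mem_span_singleton.mp (Ideal.Quotient.eq_zero_iff_mem.mp h)
      have := natDegree_le_of_dvd hqw hw0
      omega
    · rw [wH, polyRep_mk hq w hwdeg, hwD]
  apply le_antisymm
  · exact Nat.sInf_le hwit
  · apply le_csInf ⟨D, hwit⟩
    rintro w' ⟨cq, hcmem, hc0, rfl⟩
    have hrep_mk : Ideal.Quotient.mk (Ideal.span {q}) (polyRep q cq) = cq := mk_polyRep hq cq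
    have hrep0 : polyRep q cq ≠ 0 := by
      intro h
      apply hc0
      rw [← hrep_mk, h, map_zero]
    have hrdeg : (polyRep q cq).natDegree < q.natDegree := natDegree_polyRep_lt hq hq0 cq
    have hdvd : g ∣ polyRep q cq := by
      obtain ⟨u, hu⟩ := Ideal.mem_span_singleton.mp hcmem
      obtain ⟨v, rfl⟩ := Ideal.Quotient.mk_surjective u
      have heq : Ideal.Quotient.mk (Ideal.span {q}) (polyRep q cq)
          = Ideal.Quotient.mk (Ideal.span {q}) (g * v) := by
        rw [hrep_mk, hu, map_mul]
      have hq' : q ∣ (polyRep q cq - g*v) :=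
        Ideal.mem_span_singleton.mp (Ideal.Quotient.eq.mp heq)
      have h2 : g ∣ (polyRep q cq - g*v) := hgq.trans hq'
      have h3 : g ∣ (polyRep q cq - g*v) + g*v := dvd_add h2 (Dvd.intro v rfl)
      simpa using h3
    exact low _ hrep0 hrdeg hdvd

/-- `dH` of the zero code. -/
lemma dH_bot {q : F[X]} (g : F[X]) (hg : Ideal.Quotient.mk (Ideal.span {q}) g = 0) :
    dH q (Ideal.span {Ideal.Quotient.mk (Ideal.span {q}) g}) = 0 := by
  have hempty : {w : ℕ | ∃ c ∈ Ideal.span {Ideal.Quotient.mk (Ideal.span {q}) g},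
      c ≠ 0 ∧ w = wH q c} = ∅ := by
    ext w
    simp only [Set.mem_setOf_eq, Set.mem_empty_iff_false, iff_false]
    rintro ⟨c, hcmem, hc0, _⟩
    apply hc0
    rw [hg] at hcmem
    obtain ⟨u, hu⟩ := Ideal.mem_span_singleton.mp hcmem
    rw [hu, zero_mul]
  rw [dH, hempty, Nat.sInf_empty]

/-- Classification of the ideals of `F[X]/(f^P)` for `f` irreducible. -/
lemma ideal_classify {f : F[X]} (hirr : Irreducible f) (P : ℕ)
    (I : Ideal (F[X] ⧸ Ideal.span {f^P})) :
    ∃! υ : ℕ, υ ≤ P ∧ I = Ideal.span {Ideal.Quotient.mk (Ideal.span {f^P}) (f^υ)} := by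
  have hprime : Prime f := hirr.prime
  have hf0 : f ≠ 0 := hprime.ne_zero
  set mk := Ideal.Quotient.mk (Ideal.span {f^P}) with hmkdef
  have hcomap : ∀ a : ℕ, a ≤ P → Ideal.comap mk (Ideal.span {mk (f^a)}) = Ideal.span {f^a} := by
    intro a ha
    have h1 : Ideal.span {mk (f^a)} = Ideal.map mk (Ideal.span {f^a}) := by
      rw [Ideal.map_span, Set.image_singleton]
    rw [h1, Ideal.comap_map_of_surjective mk Ideal.Quotient.mk_surjective]
    have h2 : Ideal.comap mk ⊥ = Ideal.span {f^P} := by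
      rw [← RingHom.ker_eq_comap_bot, hmkdef, Ideal.mk_ker]
    rw [h2]
    exact sup_eq_left.mpr (Ideal.span_singleton_le_span_singleton.mpr (pow_dvd_pow f ha))
  -- existence
  obtain ⟨g, hg⟩ : ∃ g, Ideal.comap mk I = Ideal.span {g} := by
    have := IsPrincipalIdealRing.principal (Ideal.comap mk I)
    exact ⟨this.generator, (Ideal.span_singleton_generator _).symm⟩
  have hqJ : f^P ∈ Ideal.comap mk I := by
    show mk (f^P) ∈ I
    rw [Ideal.Quotient.eq_zero_iff_mem.mpr (Ideal.mem_span_singleton_self _)]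
    exact I.zero_mem
  have hgdvd : g ∣ f^P := by
    rw [hg] at hqJ
    exact Ideal.mem_span_singleton.mp hqJ
  obtain ⟨υ, hυP, hass⟩ := (dvd_prime_pow hprime P).mp hgdvd
  have hI : I = Ideal.span {mk (f^υ)} := by
    have h1 : I = Ideal.map mk (Ideal.comap mk I) :=
      (Ideal.map_comap_of_surjective mk Ideal.Quotient.mk_surjective I).symm
    rw [h1, hg, Ideal.span_singleton_eq_span_singleton.mpr hass, Ideal.map_span,
      Set.image_singleton]
  refine ⟨υ, ⟨hυP, hI⟩, ?_⟩
  rintro υ' ⟨hυ'P, hI'⟩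
  have hspan : Ideal.span ({f^υ'} : Set F[X]) = Ideal.span {f^υ} := by
    rw [← hcomap υ' hυ'P, ← hcomap υ hυP, ← hI', ← hI]
  have hass2 : Associated (f^υ') (f^υ) := Ideal.span_singleton_eq_span_singleton.mp hspan
  have h1 : υ' ≤ υ := (pow_dvd_pow_iff hf0 hirr.not_isUnit).mp hass2.dvd
  have h2 : υ ≤ υ' := (pow_dvd_pow_iff hf0 hirr.not_isUnit).mp hass2.symm.dvd
  omega

end Quot


/-- classification and Hamming distances of `η`-constacyclic codes of length
`np^s` over the finite field `F` with `p^m` elements, when `x^n − η₀` is irreducible. -/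
theorem stmt0 (p s n m : ℕ) (hp : p.Prime) (hs : 0 < s) (hn : 0 < n) (hm : 0 < m)
    (hnp : Nat.gcd n p = 1)
    (F : Type) [Field F] [Fintype F] (hF : Fintype.card F = p ^ m)
    (η η₀ : F) (hη : η ≠ 0) (hη₀ : η₀ ^ p ^ s = η)
    (hirr : Irreducible (X ^ n - C η₀ : F[X])) :
    (∀ I : Ideal (F[X] ⧸ Ideal.span {(X ^ (n * p ^ s) - C η : F[X])}),
      ∃! υ : ℕ, υ ≤ p ^ s ∧
        I = Ideal.span {Ideal.Quotient.mk (Ideal.span {(X ^ (n * p ^ s) - C η : F[X])})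
          ((X ^ n - C η₀) ^ υ)}) ∧
    (∀ υ ≤ p ^ s,
      (υ = 0 →
        dH (X ^ (n * p ^ s) - C η)
          (Ideal.span {Ideal.Quotient.mk (Ideal.span {(X ^ (n * p ^ s) - C η : F[X])})
            ((X ^ n - C η₀) ^ υ)}) = 1) ∧
      (∀ ℓ, ℓ ≤ p - 2 → ℓ * p ^ (s - 1) + 1 ≤ υ → υ ≤ (ℓ + 1) * p ^ (s - 1) →
        dH (X ^ (n * p ^ s) - C η)
          (Ideal.span {Ideal.Quotient.mk (Ideal.span {(X ^ (n * p ^ s) - C η : F[X])})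
            ((X ^ n - C η₀) ^ υ)}) = ℓ + 2) ∧
      (∀ i k, 1 ≤ i → i ≤ p - 1 → 1 ≤ k → k ≤ s - 1 →
        p ^ s - p ^ (s - k) + (i - 1) * p ^ (s - k - 1) + 1 ≤ υ →
        υ ≤ p ^ s - p ^ (s - k) + i * p ^ (s - k - 1) →
        dH (X ^ (n * p ^ s) - C η)
          (Ideal.span {Ideal.Quotient.mk (Ideal.span {(X ^ (n * p ^ s) - C η : F[X])})
            ((X ^ n - C η₀) ^ υ)}) = (i + 1) * p ^ k) ∧
      (υ = p ^ s →
        dH (X ^ (n * p ^ s) - C η)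
          (Ideal.span {Ideal.Quotient.mk (Ideal.span {(X ^ (n * p ^ s) - C η : F[X])})
            ((X ^ n - C η₀) ^ υ)}) = 0)) := by
  have hp2 : 2 ≤ p := hp.two_le
  -- the characteristic of F is p
  haveI hchar : CharP F p := by
    obtain ⟨n', hpc, hcard⟩ := FiniteField.card F (ringChar F)
    have hdvd : p ∣ (ringChar F)^(n' : ℕ) := by
      rw [← hcard, hF]
      exact dvd_pow_self p (by omega)
    have hpq : p = ringChar F :=
      (Nat.prime_dvd_prime_iff_eq hp hpc).mp (hp.dvd_of_dvd_pow hdvd)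
    rw [hpq]
    infer_instance
  have hps0 : 0 < p^s := pow_pos hp.pos _
  have hη₀ne : η₀ ≠ 0 := by
    intro h
    apply hη
    rw [← hη₀, h, zero_pow (by omega)]
  have hqeq : (X ^ (n * p ^ s) - C η : F[X]) = (X ^ n - C η₀)^(p^s) := by
    rw [frob_pow hp η₀ n s, hη₀]
  rw [hqeq]
  have hfm : (X ^ n - C η₀ : F[X]).Monic := monic_X_pow_sub_C η₀ hn.ne'
  have hfnd : (X ^ n - C η₀ : F[X]).natDegree = n := natDegree_X_pow_sub_C
  have hf0 : (X ^ n - C η₀ : F[X]) ≠ 0 := hfm.ne_zero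
  have hqm : ((X ^ n - C η₀ : F[X])^(p^s)).Monic := hfm.pow _
  have hqnd : ((X ^ n - C η₀ : F[X])^(p^s)).natDegree = p^s * n := by
    rw [natDegree_pow, hfnd]
  have hqnd0 : 0 < ((X ^ n - C η₀ : F[X])^(p^s)).natDegree := by
    rw [hqnd]; exact Nat.mul_pos hps0 hn
  have hwdeg : ∀ u : ℕ, u < p^s →
      ((X ^ n - C η₀ : F[X])^u).natDegree < ((X ^ n - C η₀ : F[X])^(p^s)).natDegree := by
    intro u hu
    rw [natDegree_pow, hfnd, hqnd]
    exact Nat.mul_lt_mul_of_lt_of_le hu (le_refl n) hn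
  constructor
  · intro I
    exact ideal_classify hirr (p^s) I
  · intro υ hυ
    refine ⟨?_, ?_, ?_, ?_⟩
    · rintro rfl
      apply dH_eq_of hqm hqnd0 _ 1 (by simp)
      · refine ⟨1, one_ne_zero, ?_, by simp, ?_⟩
        · rw [natDegree_one]; exact hqnd0
        · rw [← C_1, support_C (one_ne_zero : (1:F) ≠ 0), Finset.card_singleton]
      · intro v hv0 _ _
        exact Nat.one_le_iff_ne_zero.mpr
          (Finset.card_ne_zero_of_mem (natDegree_mem_support_of_nonzero hv0))
    · intro ℓ hℓ h1 h2
      have hℓp : ℓ + 1 < p := by omega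
      apply dH_eq_of hqm hqnd0 _ (ℓ+2) (pow_dvd_pow _ hυ)
      · refine ⟨(X ^ n - C η₀ : F[X])^((ℓ+1) * p^(s-1)), pow_ne_zero _ hf0, ?_,
          pow_dvd_pow _ h2, witness_mid_card hp hη₀ne hn s ℓ hs hℓp⟩
        apply hwdeg
        have e1 : p * p^(s-1) = p^s := by
          rw [← pow_succ']
          congr 1
          omega
        have e2 : (ℓ+1) * p^(s-1) ≤ (p-1) * p^(s-1) := Nat.mul_le_mul_right _ (by omega)
        have e3 : (p-1) * p^(s-1) = p * p^(s-1) - p^(s-1) := by rw [Nat.sub_mul, one_mul]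
        have := pow_pos hp.pos (s-1)
        omega
      · intro v hv0 hvdeg hvdvd
        have hkey := key_lower hp hn hη₀ne s υ v hv0 (by
          rw [hqnd] at hvdeg
          have : n * p^s = p^s * n := Nat.mul_comm _ _
          omega) hvdvd
        rwa [Dfun_mid p s υ ℓ hp2 hs hℓ h1 h2] at hkey
    · intro i k hi1 hi2 hk1 hk2 h1 h2
      have hip : i < p := by omega
      have hks : k + 1 ≤ s := by omega
      apply dH_eq_of hqm hqnd0 _ ((i+1) * p^k) (pow_dvd_pow _ hυ)
      · refine ⟨(X ^ n - C η₀ : F[X])^(p^s - p^(s-k) + i * p^(s-k-1)), pow_ne_zero _ hf0, ?_,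
          pow_dvd_pow _ h2, witness_high_card hp hη₀ne hn s k i hk1 hks hi1 hip⟩
        apply hwdeg
        have e0 : 1 ≤ s - k := by omega
        have e1 : p * p^(s-k-1) = p^(s-k) := by
          rw [← pow_succ']
          congr 1
          omega
        have e2 : i * p^(s-k-1) ≤ (p-1) * p^(s-k-1) := Nat.mul_le_mul_right _ (by omega)
        have e3 : (p-1) * p^(s-k-1) = p * p^(s-k-1) - p^(s-k-1) := by rw [Nat.sub_mul, one_mul]
        have e4 : p^(s-k) ≤ p^s := Nat.pow_le_pow_right hp.pos (by omega)
        have := pow_pos hp.pos (s-k-1)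
        have := pow_pos hp.pos (s-k)
        omega
      · intro v hv0 hvdeg hvdvd
        have hkey := key_lower hp hn hη₀ne s υ v hv0 (by
          rw [hqnd] at hvdeg
          have : n * p^s = p^s * n := Nat.mul_comm _ _
          omega) hvdvd
        rwa [Dfun_high p s υ i k hp2 hi1 hi2 hk1 hk2 hs h1 h2] at hkey
    · rintro rfl
      apply dH_bot
      exact Ideal.Quotient.eq_zero_iff_mem.mpr (Ideal.mem_span_singleton_self _)
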